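/- The Woodbury-type identity Q(λ² Q + Z Θ Zᵀ)⁻¹ Q = λ⁻² Q − λ⁻² Z (I + λ² Θ⁻¹)⁻¹ Zᵀ holds whenever Zᵀ Q⁻¹ Z = I and Θ is diagonal with positive entries. -/
import Mathlib


open Matrix

/-- The Woodbury-type identity
`Q(λ² Q + Z Θ Zᵀ)⁻¹ Q = λ⁻² Q − λ⁻² Z (I + λ² Θ⁻¹)⁻¹ Zᵀ`
holds whenever `Zᵀ Q⁻¹ Z = I` and `Θ` is diagonal with positive entries. -/
theorem woodbury_identity_genGK
    {n k : ℕ} (Q : Matrix (Fin n) (Fin n) ℝ) (hQ : Q.PosDef)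
    (l : ℝ) (hl : l ≠ 0)
    (Z : Matrix (Fin n) (Fin k) ℝ) (θ : Fin k → ℝ) (hθ : ∀ i, 0 < θ i)
    (hZorth : Zᵀ * Q⁻¹ * Z = (1 : Matrix (Fin k) (Fin k) ℝ)) :
    Q * (l^2 • Q + Z * Matrix.diagonal θ * Zᵀ)⁻¹ * Q =
      l⁻¹ ^ 2 • Q -
        l⁻¹ ^ 2 • (Z * ((1 : Matrix (Fin k) (Fin k) ℝ)
          + l^2 • (Matrix.diagonal θ)⁻¹)⁻¹ * Zᵀ) := by
  have hθ' : ∀ i, θ i ≠ 0 := fun i => (hθ i).ne'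
  have hQdet : IsUnit Q.det := isUnit_iff_ne_zero.mpr hQ.det_pos.ne'
  have hQA : Q * Q⁻¹ = 1 := Matrix.mul_nonsing_inv Q hQdet
  have hAQ : Q⁻¹ * Q = 1 := Matrix.nonsing_inv_mul Q hQdet
  have hll : l ^ 2 * l⁻¹ ^ 2 = 1 := by field_simp
  have hll' : l⁻¹ ^ 2 * l ^ 2 = 1 := by field_simp
  set c : Fin k → ℝ := fun i => 1 + l ^ 2 * (θ i)⁻¹ with hc_def
  have hcpos : ∀ i, 0 < c i := fun i =>
    add_pos_of_pos_of_nonneg one_pos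
      (mul_nonneg (sq_nonneg l) (inv_nonneg.mpr (hθ i).le))
  have hθl : ∀ i, θ i + l ^ 2 ≠ 0 := fun i =>
    (add_pos_of_pos_of_nonneg (hθ i) (sq_nonneg l)).ne'
  have hci : ∀ i, (c i)⁻¹ = θ i / (θ i + l ^ 2) := by
    intro i
    have h1 : c i = (θ i + l ^ 2) / θ i := by
      simp only [hc_def]; rw [add_div, div_self (hθ' i), div_eq_mul_inv]
    rw [h1, inv_div]
  have hc : ∀ i, c i ≠ 0 := fun i => (hcpos i).ne'
  set Cinv : Matrix (Fin k) (Fin k) ℝ := Matrix.diagonal (fun i => (c i)⁻¹) with hCinv_def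
  have hθinv : (Matrix.diagonal θ)⁻¹ = Matrix.diagonal (fun i => (θ i)⁻¹) := by
    apply Matrix.inv_eq_right_inv
    rw [Matrix.diagonal_mul_diagonal]
    have h1 : ∀ i, θ i * (θ i)⁻¹ = 1 := fun i => mul_inv_cancel₀ (hθ' i)
    simp only [h1, Matrix.diagonal_one]
  have hC : (1 : Matrix (Fin k) (Fin k) ℝ) + l ^ 2 • (Matrix.diagonal θ)⁻¹
      = Matrix.diagonal c := by
    rw [hθinv]
    ext i j
    rcases eq_or_ne i j with h | h
    · subst h
      simp [Matrix.diagonal_apply_eq, Matrix.one_apply_eq, hc_def]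
    · simp [Matrix.diagonal_apply_ne _ h, Matrix.one_apply_ne h]
  have hdCinv : (Matrix.diagonal c)⁻¹ = Cinv := by
    apply Matrix.inv_eq_right_inv
    rw [hCinv_def, Matrix.diagonal_mul_diagonal]
    have h1 : ∀ i, c i * (c i)⁻¹ = 1 := fun i => mul_inv_cancel₀ (hc i)
    simp only [h1, Matrix.diagonal_one]
  -- key diagonal identity
  have hD : l⁻¹ ^ 2 • (Matrix.diagonal θ : Matrix (Fin k) (Fin k) ℝ)
      = Cinv + l⁻¹ ^ 2 • (Matrix.diagonal θ * Cinv) := by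
    rw [hCinv_def, Matrix.diagonal_mul_diagonal]
    ext i j
    rcases eq_or_ne i j with h | h
    · subst h
      simp only [Matrix.smul_apply, Matrix.add_apply, Matrix.diagonal_apply_eq,
        smul_eq_mul]
      rw [hci i]
      field_simp [hθl i]
      ring
    · simp [Matrix.diagonal_apply_ne _ h]
  -- helper cancellation lemmas
  have hQQi : ∀ {m : ℕ} (X : Matrix (Fin n) (Fin m) ℝ), Q * (Q⁻¹ * X) = X := by
    intro m X; rw [← Matrix.mul_assoc, hQA, Matrix.one_mul]
  have hZQZ : ∀ {m : ℕ} (X : Matrix (Fin k) (Fin m) ℝ),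
      Zᵀ * (Q⁻¹ * (Z * X)) = X := by
    intro m X
    rw [← Matrix.mul_assoc, ← Matrix.mul_assoc, hZorth, Matrix.one_mul]
  set N : Matrix (Fin n) (Fin n) ℝ :=
    l⁻¹ ^ 2 • Q⁻¹ - l⁻¹ ^ 2 • (Q⁻¹ * (Z * Cinv * Zᵀ) * Q⁻¹) with hN_def
  have hMN : (l ^ 2 • Q + Z * Matrix.diagonal θ * Zᵀ) * N = 1 := by
    have key := congrArg (fun D : Matrix (Fin k) (Fin k) ℝ =>
      Z * (D * (Zᵀ * Q⁻¹))) hD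
    simp only [Matrix.smul_mul, Matrix.mul_smul, Matrix.add_mul, Matrix.mul_add,
      Matrix.mul_assoc] at key
    rw [hN_def]
    simp only [Matrix.add_mul, Matrix.mul_sub, Matrix.smul_mul, Matrix.mul_smul,
      smul_smul, smul_add, Matrix.mul_assoc, hQQi, hZQZ, hQA, hll, hll', one_smul]
    rw [key]
    abel
  have hinv : (l ^ 2 • Q + Z * Matrix.diagonal θ * Zᵀ)⁻¹ = N :=
    Matrix.inv_eq_right_inv hMN
  rw [hinv, hC, hdCinv, hN_def]
  simp only [Matrix.mul_sub, Matrix.sub_mul, Matrix.mul_smul, Matrix.smul_mul,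
    Matrix.mul_assoc, hQQi, hAQ, Matrix.mul_one]
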